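/- Let Q be a quad vector of length n and let Q̂ of length 3εn be obtained by replacing each character of Q by a run of 3ε copies of itself (ε ≥ 1). Then for each run (positions [3εi, 3ε(i+1))), the exact rank of the character Q[i] increases by 3ε ≥ 2ε across the run, while the rank of every other character increases by 0 ≤ ε across the run. Hence Q can be reconstructed from any oracle answering rank queries on Q̂ with additive error at most ε. -/

import Mathlib

/-- Rank in the expansion `Q̂` of `Q`, where each character of `Q` is
replaced by a run of `3ε` copies: `Q̂[k] = Q[⌊k / (3ε)⌋]`. -/
def rankHat (ε : ℕ) (Q : ℕ → Fin 4) (α : Fin 4) (j : ℕ) : ℕ :=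
  ((Finset.range j).filter (fun k => Q (k / (3 * ε)) = α)).card

lemma rankHat_step (ε : ℕ) (hε : 1 ≤ ε) (Q : ℕ → Fin 4) (α : Fin 4) (i : ℕ) :
    rankHat ε Q α (3 * ε * (i + 1)) =
      rankHat ε Q α (3 * ε * i) + (if Q i = α then 3 * ε else 0) := by
  have hpos : 0 < 3 * ε := by omega
  unfold rankHat
  simp only [Finset.range_eq_Ico] at *
  have hsplit : Finset.Ico 0 (3 * ε * (i + 1)) =
      Finset.Ico 0 (3 * ε * i) ∪ Finset.Ico (3 * ε * i) (3 * ε * (i + 1)) := by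
    rw [Finset.Ico_union_Ico_eq_Ico (by omega) (by nlinarith)]
  rw [hsplit, Finset.filter_union, Finset.card_union_of_disjoint]
  · congr 1
    have hk : ∀ k ∈ Finset.Ico (3 * ε * i) (3 * ε * (i + 1)), k / (3 * ε) = i := by
      intro k hk
      simp only [Finset.mem_Ico] at hk
      refine Nat.div_eq_of_lt_le (by nlinarith [hk.1]) (by nlinarith [hk.2])
    rw [Finset.filter_congr (fun k hkk => by rw [hk k hkk])]
    by_cases h : Q i = α
    · simp [h, Nat.Ico_eq_range', Nat.mul_add]
    · simp [h]
  · exact Finset.disjoint_filter_filter (Finset.Ico_disjoint_Ico_consecutive 0 _ _)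

theorem reconstruct_from_approx_rank (ε : ℕ) (hε : 1 ≤ ε) (Q : ℕ → Fin 4) :
    (∀ i : ℕ,
        rankHat ε Q (Q i) (3 * ε * (i + 1)) =
          rankHat ε Q (Q i) (3 * ε * i) + 3 * ε ∧ 2 * ε ≤ 3 * ε) ∧
    (∀ i : ℕ, ∀ β : Fin 4, β ≠ Q i →
        rankHat ε Q β (3 * ε * (i + 1)) = rankHat ε Q β (3 * ε * i)) ∧
    (∀ g : Fin 4 → ℕ → ℕ,
        (∀ α j, rankHat ε Q α j ≤ g α j ∧ g α j ≤ rankHat ε Q α j + ε) →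
        ∀ i : ℕ, ∀ α : Fin 4,
          Q i = α ↔ g α (3 * ε * i) + 2 * ε ≤ g α (3 * ε * (i + 1))) := by
  refine ⟨fun i => ⟨?_, by omega⟩, fun i β hβ => ?_, fun g hg i α => ?_⟩
  · rw [rankHat_step ε hε Q (Q i) i, if_pos rfl]
  · rw [rankHat_step ε hε Q β i, if_neg (fun h => hβ h.symm), add_zero]
  · obtain ⟨h1l, h1r⟩ := hg α (3 * ε * i)
    obtain ⟨h2l, h2r⟩ := hg α (3 * ε * (i + 1))
    have hstep := rankHat_step ε hε Q α i
    constructor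
    · intro h
      rw [h, if_pos rfl] at hstep
      omega
    · intro h
      by_contra hne
      rw [if_neg hne] at hstep
      omega
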